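/- Let G ≤ Homeo(S¹) be transitive and contain a continuous deformation of the identity. Then either J_x = ∅ for every x ∈ S¹, or the complement S¹∖J_x is finite for every x ∈ S¹. -/

import Mathlib

noncomputable section

open Filter Topology Set

/-- The circle `S¹`, realised as `ℝ/ℤ`. -/
abbrev S1 := UnitAddCircle

/-- Self-homeomorphisms of the circle. -/
abbrev HomeoCircle := S1 ≃ₜ S1

instance : Group HomeoCircle where
  mul f g := g.trans f
  one := Homeomorph.refl S1
  inv := Homeomorph.symm
  mul_assoc _ _ _ := rfl
  one_mul _ := rfl
  mul_one _ := rfl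
  inv_mul_cancel := Homeomorph.self_trans_symm

@[simp] lemma HomeoCircle.mul_apply (f g : HomeoCircle) (x : S1) : (f * g) x = f (g x) := rfl
@[simp] lemma HomeoCircle.one_apply (x : S1) : (1 : HomeoCircle) x = x := rfl
@[simp] lemma HomeoCircle.inv_apply (f : HomeoCircle) (x : S1) : f⁻¹ x = f.symm x := rfl

/-- The uniform topology on the homeomorphism group of the circle: the topology induced
by uniform convergence of a homeomorphism together with its inverse. -/
instance : TopologicalSpace HomeoCircle :=
  TopologicalSpace.induced
    (fun f : HomeoCircle =>
      ((⟨f, f.continuous⟩ : C(S1, S1)), (⟨f.symm, f.symm.continuous⟩ : C(S1, S1))))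
    inferInstance

/-- A homeomorphism of the circle is orientation preserving if it preserves the natural
cyclic (betweenness) order of the circle. -/
def OrientationPreserving (f : HomeoCircle) : Prop :=
  ∀ a b c : S1, btw a b c ↔ btw (f a) (f b) (f c)

/-- The group `Homeo(S¹)` of orientation-preserving homeomorphisms of the circle, as a
subgroup of the group of all self-homeomorphisms of the circle. -/
def HomeoS1 : Subgroup HomeoCircle where
  carrier := {f | OrientationPreserving f}
  one_mem' := fun _ _ _ => Iff.rfl
  mul_mem' := fun {f g} hf hg a b c => (hg a b c).trans (hf _ _ _)
  inv_mem' := fun {f} hf a b c => by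
    simpa using (hf (f.symm a) (f.symm b) (f.symm c)).symm

/-- A subset of `Homeo(S¹)` acts transitively on the circle. -/
def IsTransitiveGrp (H : Set HomeoCircle) : Prop :=
  ∀ x y : S1, ∃ g ∈ H, g x = y

/-- `H` is continuously `n`-transitive: for every compatible pair of paths of `n`-tuples of
pairwise-distinct points there is a continuous path in `H` carrying one to the other. -/
def ContinuouslyTransitive (H : Set HomeoCircle) (n : ℕ) : Prop :=
  ∀ X Y : unitInterval → Fin n → S1,
    (∀ i, Continuous fun t => X t i) → (∀ i, Continuous fun t => Y t i) →
    (∀ t, Function.Injective (X t)) → (∀ t, Function.Injective (Y t)) →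
    (∃ h : unitInterval → HomeoCircle, Continuous h ∧ (∀ t, h t ∈ HomeoS1) ∧
      ∀ t i, h t (X t i) = Y t i) →
    ∃ g : unitInterval → HomeoCircle, Continuous g ∧ (∀ t, g t ∈ H) ∧
      ∀ t i, g t (X t i) = Y t i

/-- A continuous deformation of the identity in `H`: a non-constant continuous path in `H`
starting at the identity. -/
def IsIdDeformation (H : Set HomeoCircle) (f : unitInterval → HomeoCircle) : Prop :=
  Continuous f ∧ (∀ t, f t ∈ H) ∧ f 0 = 1 ∧ ∃ t, f t ≠ 1

/-- The set `J_x`: points that can be moved by some continuous deformation of the identity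
in `H` fixing `x` throughout. -/
def Jset (H : Set HomeoCircle) (x : S1) : Set S1 :=
  {y | ∃ f : unitInterval → HomeoCircle, Continuous f ∧ (∀ t, f t ∈ H) ∧ f 0 = 1 ∧
    (∀ t, f t x = x) ∧ ∃ t, f t y ≠ y}

/-- The set `J_{x₁…x_n}`: points that can be moved by some continuous deformation of the
identity in `H` fixing each `x i` throughout. -/
def JsetTuple (H : Set HomeoCircle) {n : ℕ} (x : Fin n → S1) : Set S1 :=
  {y | ∃ f : unitInterval → HomeoCircle, Continuous f ∧ (∀ t, f t ∈ H) ∧ f 0 = 1 ∧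
    (∀ t i, f t (x i) = x i) ∧ ∃ t, f t y ≠ y}

/-- The rotation group `SO(2,ℝ)`, acting on `S¹ = ℝ/ℤ` by translations. -/
def rotationSet : Set HomeoCircle :=
  {f | ∃ a : S1, ∀ x : S1, f x = a + x}

/-- `A` is conjugate to `B` inside `Homeo(S¹)`. -/
def ConjugateIn (A B : Set HomeoCircle) : Prop :=
  ∃ Φ : HomeoCircle, Φ ∈ HomeoS1 ∧ ∀ f : HomeoCircle, f ∈ A ↔ Φ⁻¹ * f * Φ ∈ B

/-- The group `PSL(2,ℝ)` of Möbius transformations of the circle: in the coordinate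
`z = e^{2πiθ}` on the unit circle, the maps `z ↦ e^{iθ}(z-a)/(1-āz)` with `|a| < 1`. -/
def mobiusSet : Set HomeoCircle :=
  {f | ∃ (a : ℂ) (θ : ℝ), ‖a‖ < 1 ∧
    ∀ x : S1, (AddCircle.toCircle (f x) : ℂ) =
      Complex.exp (θ * Complex.I) *
        (((AddCircle.toCircle x : ℂ) - a) / (1 - (starRingEnd ℂ) a * (AddCircle.toCircle x : ℂ)))}

/-- `Homeo_k(S¹)`, the `k`-fold cyclic cover of `Homeo(S¹)`: orientation-preserving
homeomorphisms commuting with the rotation by `1/k`. -/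
def homeoKSet (k : ℕ) : Set HomeoCircle :=
  {f | f ∈ HomeoS1 ∧ ∀ x : S1, f ((((k : ℝ)⁻¹ : ℝ) : S1) + x) = (((k : ℝ)⁻¹ : ℝ) : S1) + f x}

/-- `PSL_k(2,ℝ)`, the `k`-fold cyclic cover of `PSL(2,ℝ)`: elements of `Homeo_k(S¹)`
descending to a Möbius transformation under the `k`-fold covering `x ↦ k • x` of `ℝ/ℤ`. -/
def pslKSet (k : ℕ) : Set HomeoCircle :=
  {f | f ∈ homeoKSet k ∧ ∃ m ∈ mobiusSet, ∀ x : S1, k • (f x) = m (k • x)}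

/-- `Gset` is a cyclic cover of `Hset`, with deck transformation group generated by `R`,
an order-`k` homeomorphism conjugate in `Homeo(S¹)` to a rotation which commutes with every
element of `Gset`; `Hset` is the induced group on the quotient circle, realised via the
orbit projection `p`. -/
def IsCyclicCover (Gset Hset : Set HomeoCircle) (R : HomeoCircle) (k : ℕ) : Prop :=
  0 < k ∧ R ∈ HomeoS1 ∧ orderOf R = k ∧
    (∃ Φ : HomeoCircle, Φ ∈ HomeoS1 ∧ Φ⁻¹ * R * Φ ∈ rotationSet) ∧
    (∀ g ∈ Gset, ∀ x : S1, R (g x) = g (R x)) ∧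
    ∃ p : S1 → S1, Continuous p ∧ Function.Surjective p ∧
      (∀ x y : S1, p x = p y ↔ ∃ j : ℕ, (R ^ j) x = y) ∧
      (∀ h : HomeoCircle, h ∈ Hset ↔ ∃ g ∈ Gset, ∀ x : S1, p (g x) = h (p x))

/-- Condition (3): `Gset` matches every orientation-preserving homeomorphism on every
finite set of points. -/
def MatchesFinitely (Gset : Set HomeoCircle) : Prop :=
  ∀ f : HomeoCircle, f ∈ HomeoS1 → ∀ (n : ℕ) (x : Fin n → S1),
    ∃ g ∈ Gset, ∀ i, g (x i) = f (x i)

/-- `H` is a convergence group. -/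
def IsConvergenceGroup (H : Set HomeoCircle) : Prop :=
  ∀ g : ℕ → HomeoCircle, (∀ n, g n ∈ H) → Function.Injective g →
    ∃ φ : ℕ → ℕ, StrictMono φ ∧
      ((∃ h : HomeoCircle, h ∈ H ∧
          TendstoUniformly (fun k x => g (φ k) x) (⇑h) atTop ∧
          TendstoUniformly (fun k x => (g (φ k))⁻¹ x) (⇑(h⁻¹)) atTop) ∨
       (∃ x₀ y₀ : S1,
          (∀ K : Set S1, IsCompact K → K ⊆ {y₀}ᶜ →
            TendstoUniformlyOn (fun k x => g (φ k) x) (fun _ => x₀) atTop K) ∧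
          (∀ K : Set S1, IsCompact K → K ⊆ {x₀}ᶜ →
            TendstoUniformlyOn (fun k x => (g (φ k))⁻¹ x) (fun _ => y₀) atTop K)))

section ProofAux

open Set Function

private lemma S1.isOpenMap_coe : IsOpenMap ((↑) : ℝ → S1) := QuotientAddGroup.isOpenMap_coe
private lemma S1.continuous_coe : Continuous ((↑) : ℝ → S1) := continuous_quotient_mk'

private lemma S1.exists_rep (c : ℝ) (z : S1) : ∃ x : ℝ, x ∈ Set.Ico c (c + 1) ∧ (x : S1) = z :=
  ⟨(AddCircle.equivIco 1 c z : ℝ), (AddCircle.equivIco 1 c z).2,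
    (AddCircle.equivIco 1 c).symm_apply_apply z⟩

private lemma not_countable_nat_bool : ¬ Countable (ℕ → Bool) := by
  classical
  intro _
  have hinj : Function.Injective (fun (s : Set ℕ) (n : ℕ) => decide (n ∈ s)) := by
    intro s t hst
    ext n
    simpa [decide_eq_decide] using congrFun hst n
  haveI : Countable (Set ℕ) := hinj.countable
  obtain ⟨g, hg⟩ := (countable_iff_exists_injective (Set ℕ)).mp ‹_›
  exact Function.cantor_injective g hg

private lemma fiber_countable (z : S1) : {x : ℝ | (x : S1) = z}.Countable := by
  obtain ⟨x₀, _, hx₀⟩ := S1.exists_rep 0 z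
  have hsub : {x : ℝ | (x : S1) = z} ⊆ Set.range (fun n : ℤ => x₀ + (n : ℝ)) := by
    intro x hx
    have hxz : (x : S1) = (x₀ : S1) := by rw [Set.mem_setOf_eq] at hx; rw [hx, hx₀]
    rw [QuotientAddGroup.eq] at hxz
    obtain ⟨k, hk⟩ := (AddSubgroup.mem_zmultiples_iff).mp hxz
    have hk' : (k : ℝ) = -x + x₀ := by simpa using hk
    refine ⟨-k, ?_⟩
    show x₀ + ((-k : ℤ) : ℝ) = x
    push_cast
    linarith
  exact Set.Countable.mono hsub (Set.countable_range _)

/-- The key one-sided-isolation property, stated invariantly. -/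
private def QProp (M : Set S1) (m : S1) : Prop :=
  ∃ I : Set S1, IsOpen I ∧ IsPreconnected I ∧ I.Nonempty ∧ I ∩ M = ∅ ∧ m ∈ closure I

private lemma homog_finite (M : Set S1) (hclosed : IsClosed M) (hne : M.Nonempty)
    (hproper : M ≠ Set.univ)
    (htrans : ∀ w ∈ M, ∀ w' ∈ M, ∃ g : HomeoCircle, ⇑g '' M = M ∧ g w = w') :
    M.Finite := by
  by_contra hinf
  -- Step 1: no isolated points
  have hiso : ∀ m ∈ M, ∀ V : Set S1, IsOpen V → m ∈ V → ∃ m', m' ∈ V ∩ M ∧ m' ≠ m := by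
    by_contra hcon
    push_neg at hcon
    obtain ⟨m, hm, V, hV, hmV, hVm⟩ := hcon
    have hall : ∀ x ∈ M, ∃ U : Set S1, IsOpen U ∧ x ∈ U ∧ ∀ z ∈ U ∩ M, z = x := by
      intro x hx
      obtain ⟨g, hgM, hgm⟩ := htrans m hm x hx
      refine ⟨⇑g '' V, g.isOpenMap V hV, ⟨m, hmV, hgm⟩, ?_⟩
      rintro z ⟨⟨v, hv, rfl⟩, hzM⟩
      have hvM : v ∈ M := by
        have h1 : g v ∈ ⇑g '' M := hgM.symm ▸ hzM
        obtain ⟨u, hu, huv⟩ := h1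
        rwa [← g.injective huv]
      rw [hVm v ⟨hv, hvM⟩, hgm]
    choose! U hUopen hUmem hUsmall using hall
    obtain ⟨t, htM, hcover⟩ := (hclosed.isCompact).elim_nhds_subcover U
      (fun x hx => (hUopen x hx).mem_nhds (hUmem x hx))
    apply hinf
    refine Set.Finite.subset t.finite_toSet ?_
    intro z hz
    obtain ⟨x, hxt, hzU⟩ := Set.mem_iUnion₂.mp (hcover hz)
    rw [hUsmall x (htM x hxt) z ⟨hzU, hz⟩]
    exact Finset.mem_coe.mpr hxt
  -- Step 2: M is uncountable
  have hMunc : ¬ M.Countable := by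
    intro hMc
    set W : Set ℝ := (fun x : ℝ => (x : S1)) ⁻¹' M with hW
    have hWclosed : IsClosed W := hclosed.preimage S1.continuous_coe
    have hWne : W.Nonempty := by
      obtain ⟨m, hm⟩ := hne
      obtain ⟨x, _, hx⟩ := S1.exists_rep 0 m
      exact ⟨x, by simp only [hW, Set.mem_preimage, hx]; exact hm⟩
    have hWperf : Perfect W := by
      refine ⟨hWclosed, ?_⟩
      intro x hx
      rw [accPt_iff_nhds]
      intro u hu
      obtain ⟨ε, hε, hball⟩ := Metric.mem_nhds_iff.mp hu
      have hOopen : IsOpen ((fun r : ℝ => (r : S1)) '' Metric.ball x ε) :=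
        S1.isOpenMap_coe _ Metric.isOpen_ball
      have hmem : ((x : ℝ) : S1) ∈ (fun r : ℝ => (r : S1)) '' Metric.ball x ε :=
        ⟨x, Metric.mem_ball_self hε, rfl⟩
      obtain ⟨m', ⟨hm'1, hm'2⟩, hm'3⟩ := hiso (↑x) hx _ hOopen hmem
      obtain ⟨y, hy, rfl⟩ := hm'1
      exact ⟨y, ⟨hball hy, hm'2⟩, fun h => hm'3 (by rw [h])⟩
    obtain ⟨f, hfrange, _, hfinj⟩ := hWperf.exists_nat_bool_injection hWne
    have hWc : W.Countable := by
      have hsub : W ⊆ ⋃ m ∈ M, {x : ℝ | (x : S1) = m} := fun x hx => Set.mem_biUnion hx rfl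
      exact Set.Countable.mono hsub (hMc.biUnion fun m _ => fiber_countable m)
    have hrc : (Set.range f).Countable := Set.Countable.mono hfrange hWc
    haveI := hrc.to_subtype
    exact not_countable_nat_bool (Countable.of_equiv _ (Equiv.ofInjective f hfinj).symm)
  -- Step 3: invariance of QProp
  have hQinv : ∀ g : HomeoCircle, ⇑g '' M = M → ∀ m, QProp M m → QProp M (g m) := by
    rintro g hgM m ⟨I, hIo, hIc, hIne, hIM, hmI⟩
    refine ⟨⇑g '' I, g.isOpenMap I hIo, hIc.image _ g.continuous.continuousOn,
      hIne.image _, ?_, ?_⟩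
    · rw [← hgM, ← Set.image_inter g.injective, hIM, Set.image_empty]
    · exact image_closure_subset_closure_image g.continuous ⟨m, hmI, rfl⟩
  -- Step 4: existence of a QProp point
  obtain ⟨p₀, hp₀⟩ : ∃ p, p ∉ M := by
    by_contra hc; push_neg at hc; exact hproper (Set.eq_univ_iff_forall.mpr hc)
  obtain ⟨a, _, hap⟩ := S1.exists_rep 0 p₀
  have hQ0 : ∃ m₀ ∈ M, QProp M m₀ := by
    set W1 : Set ℝ := ((fun x : ℝ => (x : S1)) ⁻¹' M) ∩ Set.Icc a (a + 1) with hW1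
    have hW1cpt : IsCompact W1 := isCompact_Icc.inter_left (hclosed.preimage S1.continuous_coe)
    have hW1ne : W1.Nonempty := by
      obtain ⟨m, hm⟩ := hne
      obtain ⟨x, hx, hxm⟩ := S1.exists_rep a m
      exact ⟨x, ⟨by simp only [Set.mem_preimage, hxm]; exact hm, Set.Ico_subset_Icc_self hx⟩⟩
    set s := sSup W1 with hs
    have hsW1 : s ∈ W1 := hW1cpt.sSup_mem hW1ne
    have hsM : ((s : ℝ) : S1) ∈ M := hsW1.1
    have hsa : a < s := by
      rcases eq_or_lt_of_le hsW1.2.1 with h | h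
      · exfalso; apply hp₀; rw [← hap, h]; exact hsM
      · exact h
    have hs1 : s < a + 1 := by
      rcases eq_or_lt_of_le hsW1.2.2 with h | h
      · exfalso; apply hp₀; rw [← hap]
        have h2 : ((s : ℝ) : S1) = ((a : ℝ) : S1) := by rw [h]; exact AddCircle.coe_add_period 1 a
        rw [← h2]; exact hsM
      · exact h
    refine ⟨(s : S1), hsM, (fun r : ℝ => (r : S1)) '' Set.Ioo s (a + 1),
      S1.isOpenMap_coe _ isOpen_Ioo,
      isPreconnected_Ioo.image _ S1.continuous_coe.continuousOn,
      (Set.nonempty_Ioo.mpr hs1).image _, ?_, ?_⟩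
    · rw [Set.eq_empty_iff_forall_notMem]
      rintro z ⟨⟨x, hx, rfl⟩, hzM⟩
      have hxW1 : x ∈ W1 := ⟨hzM, ⟨le_of_lt (lt_trans hsa hx.1), le_of_lt hx.2⟩⟩
      exact absurd (le_csSup hW1cpt.bddAbove hxW1) (not_le.mpr hx.1)
    · apply image_closure_subset_closure_image S1.continuous_coe
      exact ⟨s, by rw [closure_Ioo (ne_of_lt hs1)]; exact ⟨le_refl s, le_of_lt hs1⟩, rfl⟩
  -- Step 5: the set of QProp points is countable
  obtain ⟨p₁, hp₁⟩ := hne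
  obtain ⟨c, _, hc⟩ := S1.exists_rep 0 p₁
  have hQcount : {m | m ∈ M ∧ QProp M m}.Countable := by
    set W2 : Set ℝ := ((fun x : ℝ => (x : S1)) ⁻¹' M) ∩ Set.Ioo c (c + 1) with hW2
    set OSL : Set ℝ :=
      ⋃ q : ℚ, {x : ℝ | x ∈ W2 ∧ (q : ℝ) < x ∧ Set.Ioo (q : ℝ) x ∩ W2 = ∅} with hOSL
    set OSR : Set ℝ :=
      ⋃ q : ℚ, {x : ℝ | x ∈ W2 ∧ x < (q : ℝ) ∧ Set.Ioo x (q : ℝ) ∩ W2 = ∅} with hOSR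
    have hOSLc : OSL.Countable := Set.countable_iUnion fun q => Set.Subsingleton.countable (by
      intro x hx y hy
      by_contra hxy
      rcases lt_or_gt_of_ne hxy with h | h
      · exact (Set.eq_empty_iff_forall_notMem.mp hy.2.2 x) ⟨⟨hx.2.1, h⟩, hx.1⟩
      · exact (Set.eq_empty_iff_forall_notMem.mp hx.2.2 y) ⟨⟨hy.2.1, h⟩, hy.1⟩)
    have hOSRc : OSR.Countable := Set.countable_iUnion fun q => Set.Subsingleton.countable (by
      intro x hx y hy
      by_contra hxy
      rcases lt_or_gt_of_ne hxy with h | h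
      · exact (Set.eq_empty_iff_forall_notMem.mp hx.2.2 y) ⟨⟨h, hy.2.1⟩, hy.1⟩
      · exact (Set.eq_empty_iff_forall_notMem.mp hy.2.2 x) ⟨⟨h, hx.2.1⟩, hx.1⟩)
    have hsub : {m | m ∈ M ∧ QProp M m} ⊆
        insert p₁ ((fun x : ℝ => (x : S1)) '' (OSL ∪ OSR)) := by
      rintro m ⟨hmM, I, hIo, hIc, hIne, hIM, hmI⟩
      by_cases hmp : m = p₁
      · exact Set.mem_insert_iff.mpr (Or.inl hmp)
      refine Set.mem_insert_iff.mpr (Or.inr ?_)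
      obtain ⟨ρ, hρIco, hρ⟩ := S1.exists_rep c m
      have hρc : c < ρ := by
        rcases eq_or_lt_of_le hρIco.1 with h | h
        · exfalso; apply hmp; rw [← hρ, ← h, hc]
        · exact h
      have hρIoo : ρ ∈ Set.Ioo c (c + 1) := ⟨hρc, hρIco.2⟩
      have hρW2 : ρ ∈ W2 := ⟨by simp only [Set.mem_preimage, hρ]; exact hmM, hρIoo⟩
      set J : Set ℝ := {x | x ∈ Set.Ioo c (c + 1) ∧ (x : S1) ∈ I} with hJ
      have hJW2 : ∀ x ∈ J, x ∉ W2 := by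
        rintro x ⟨_, hxI⟩ ⟨hxM, _⟩
        exact Set.eq_empty_iff_forall_notMem.mp hIM _ ⟨hxI, hxM⟩
      have hρJ : ρ ∉ J := by
        rintro ⟨_, hρI⟩
        exact Set.eq_empty_iff_forall_notMem.mp hIM _ ⟨hρI, by rw [hρ]; exact hmM⟩
      have hρcl : ρ ∈ closure J := by
        rw [mem_closure_iff]
        intro o ho hρo
        obtain ⟨ε, hε, hball⟩ := Metric.isOpen_iff.mp (ho.inter isOpen_Ioo) ρ ⟨hρo, hρIoo⟩
        have himg : m ∈ (fun r : ℝ => (r : S1)) '' Metric.ball ρ ε :=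
          ⟨ρ, Metric.mem_ball_self hε, hρ⟩
        obtain ⟨z, hzO, hzI⟩ := (mem_closure_iff.mp hmI) _
          (S1.isOpenMap_coe _ Metric.isOpen_ball) himg
        obtain ⟨xz, hxz, rfl⟩ := hzO
        have hxzm := hball hxz
        exact ⟨xz, hxzm.1, ⟨hxzm.2, hzI⟩⟩
      have hJord : ∀ x ∈ J, ∀ z ∈ J, ∀ y, x < y → y < z → y ∈ J := by
        rintro x ⟨hxIoo, hxI⟩ z ⟨hzIoo, hzI⟩ y hxy hyz
        have hyIoo : y ∈ Set.Ioo c (c + 1) := ⟨lt_trans hxIoo.1 hxy, lt_trans hyz hzIoo.2⟩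
        refine ⟨hyIoo, ?_⟩
        by_contra hyI
        have hIsub : I ⊆ ((fun r : ℝ => (r : S1)) '' Set.Ioo c y)
            ∪ ((fun r : ℝ => (r : S1)) '' Set.Ioo y (c + 1)) := by
          intro w hw
          obtain ⟨u, huIco, hu⟩ := S1.exists_rep c w
          have huc : c < u := by
            rcases eq_or_lt_of_le huIco.1 with h | h
            · exfalso
              apply Set.eq_empty_iff_forall_notMem.mp hIM w
              exact ⟨hw, by rw [← hu, ← h, hc]; exact hp₁⟩
            · exact h
          have huy : u ≠ y := by rintro rfl; exact hyI (hu ▸ hw)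
          rcases lt_or_gt_of_ne huy with h | h
          · exact Or.inl ⟨u, ⟨huc, h⟩, hu⟩
          · exact Or.inr ⟨u, ⟨h, huIco.2⟩, hu⟩
        have h1 : (I ∩ ((fun r : ℝ => (r : S1)) '' Set.Ioo c y)).Nonempty :=
          ⟨(x : S1), hxI, ⟨x, ⟨hxIoo.1, hxy⟩, rfl⟩⟩
        have h2 : (I ∩ ((fun r : ℝ => (r : S1)) '' Set.Ioo y (c + 1))).Nonempty :=
          ⟨(z : S1), hzI, ⟨z, ⟨hyz, hzIoo.2⟩, rfl⟩⟩
        obtain ⟨w, hwI, hwAB⟩ :=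
          hIc _ _ (S1.isOpenMap_coe _ isOpen_Ioo) (S1.isOpenMap_coe _ isOpen_Ioo) hIsub h1 h2
        obtain ⟨⟨u, hu, huw⟩, ⟨v, hv, hvw⟩⟩ := hwAB
        have hu' : u ∈ Set.Ico c (c + 1) := ⟨le_of_lt hu.1, lt_trans hu.2 hyIoo.2⟩
        have hv' : v ∈ Set.Ico c (c + 1) := ⟨le_of_lt (lt_trans hyIoo.1 hv.1), hv.2⟩
        have hcoe : ((u : ℝ) : S1) = ((v : ℝ) : S1) := by rw [huw, hvw]
        have huv : u = v := (AddCircle.coe_eq_coe_iff_of_mem_Ico hu' hv').mp hcoe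
        exact absurd huv (ne_of_lt (lt_trans hu.2 hv.1))
      have hJsplit : J = (J ∩ Set.Iio ρ) ∪ (J ∩ Set.Ioi ρ) := by
        ext x
        constructor
        · intro hx
          rcases lt_trichotomy x ρ with h | h | h
          · exact Or.inl ⟨hx, h⟩
          · exact absurd (h ▸ hx) hρJ
          · exact Or.inr ⟨hx, h⟩
        · rintro (⟨h, _⟩ | ⟨h, _⟩) <;> exact h
      have hcl2 : ρ ∈ closure (J ∩ Set.Iio ρ) ∪ closure (J ∩ Set.Ioi ρ) := by
        rw [hJsplit, closure_union] at hρcl; exact hρcl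
      refine ⟨ρ, ?_, hρ⟩
      rcases hcl2 with hL | hR
      · -- left-isolated
        have hne' : (J ∩ Set.Iio ρ).Nonempty := by
          rcases Set.eq_empty_or_nonempty (J ∩ Set.Iio ρ) with h | h
          · rw [h, closure_empty] at hL; exact absurd hL (Set.notMem_empty ρ)
          · exact h
        obtain ⟨j, hjJ, hjρ⟩ := hne'
        have hempty : Set.Ioo j ρ ∩ W2 = ∅ := by
          rw [Set.eq_empty_iff_forall_notMem]
          rintro y ⟨⟨hjy, hyρ⟩, hyW2⟩
          obtain ⟨j', hj'⟩ := (mem_closure_iff.mp hL) (Set.Ioi y) isOpen_Ioi hyρ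
          exact hJW2 y (hJord j hjJ j' hj'.2.1 y hjy hj'.1) hyW2
        have hjρ' : j < ρ := hjρ
        obtain ⟨q, hq1, hq2⟩ := exists_rat_btwn hjρ'
        have hempty' : Set.Ioo (q : ℝ) ρ ∩ W2 = ∅ := by
          rw [Set.eq_empty_iff_forall_notMem]
          rintro y ⟨hy, hyW⟩
          exact Set.eq_empty_iff_forall_notMem.mp hempty y ⟨⟨lt_trans hq1 hy.1, hy.2⟩, hyW⟩
        have hmemL : ρ ∈ OSL := by
          rw [hOSL]
          exact Set.mem_iUnion.mpr ⟨q, hρW2, hq2, hempty'⟩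
        exact Or.inl hmemL
      · -- right-isolated
        have hne' : (J ∩ Set.Ioi ρ).Nonempty := by
          rcases Set.eq_empty_or_nonempty (J ∩ Set.Ioi ρ) with h | h
          · rw [h, closure_empty] at hR; exact absurd hR (Set.notMem_empty ρ)
          · exact h
        obtain ⟨j, hjJ, hjρ⟩ := hne'
        have hempty : Set.Ioo ρ j ∩ W2 = ∅ := by
          rw [Set.eq_empty_iff_forall_notMem]
          rintro y ⟨⟨hρy, hyj⟩, hyW2⟩
          obtain ⟨j', hj'⟩ := (mem_closure_iff.mp hR) (Set.Iio y) isOpen_Iio hρy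
          exact hJW2 y (hJord j' hj'.2.1 j hjJ y hj'.1 hyj) hyW2
        have hjρ' : ρ < j := hjρ
        obtain ⟨q, hq1, hq2⟩ := exists_rat_btwn hjρ'
        have hempty' : Set.Ioo ρ (q : ℝ) ∩ W2 = ∅ := by
          rw [Set.eq_empty_iff_forall_notMem]
          rintro y ⟨hy, hyW⟩
          exact Set.eq_empty_iff_forall_notMem.mp hempty y ⟨⟨hy.1, lt_trans hy.2 hq2⟩, hyW⟩
        have hmemR : ρ ∈ OSR := by
          rw [hOSR]
          exact Set.mem_iUnion.mpr ⟨q, hρW2, hq1, hempty'⟩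
        exact Or.inr hmemR
    exact Set.Countable.mono hsub (((hOSLc.union hOSRc).image _).insert p₁)
  -- Step 6: combine
  obtain ⟨m₀, hm₀M, hQm₀⟩ := hQ0
  have hex : ∃ ms ∈ M, ¬ QProp M ms := by
    by_contra hcon
    push_neg at hcon
    have hsub2 : M ⊆ {m | m ∈ M ∧ QProp M m} := fun m hm => ⟨hm, hcon m hm⟩
    exact hMunc (Set.Countable.mono hsub2 hQcount)
  obtain ⟨ms, hmsM, hmsQ⟩ := hex
  obtain ⟨g, hgM, hgm⟩ := htrans m₀ hm₀M ms hmsM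
  exact hmsQ (hgm ▸ hQinv g hgM m₀ hQm₀)

end ProofAux

section JsetProof

private lemma Jset_isOpen (H : Set HomeoCircle) (x : S1) : IsOpen (Jset H x) := by
  rw [isOpen_iff_forall_mem_open]
  rintro y ⟨f, hc, hm, h0, hfix, t, hty⟩
  refine ⟨{z | f t z ≠ z}, fun z hz => ⟨f, hc, hm, h0, hfix, t, hz⟩, ?_, hty⟩
  have hcl : IsClosed {z : S1 | f t z = z} := isClosed_eq (f t).continuous continuous_id
  exact hcl.isOpen_compl

private lemma not_mem_Jset_self (H : Set HomeoCircle) (x : S1) : x ∉ Jset H x := by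
  rintro ⟨f, _, _, _, hfix, t, ht⟩
  exact ht (hfix t)

private lemma Jset_subset_of_not_mem {H : Set HomeoCircle} {x y : S1} (hy : y ∉ Jset H x) :
    Jset H x ⊆ Jset H y := by
  rintro z ⟨f, hc, hm, h0, hfix, t, htz⟩
  refine ⟨f, hc, hm, h0, fun s => ?_, t, htz⟩
  by_contra hs
  exact hy ⟨f, hc, hm, h0, hfix, s, hs⟩

private lemma continuous_conj {f : unitInterval → HomeoCircle} (hf : Continuous f)
    (g : HomeoCircle) : Continuous fun t => g * f t * g⁻¹ := by
  have hF : Continuous fun h : HomeoCircle =>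
      ((⟨h, h.continuous⟩ : C(S1, S1)), (⟨h.symm, h.symm.continuous⟩ : C(S1, S1))) :=
    continuous_induced_dom
  have h1 : Continuous fun t : unitInterval => (⟨f t, (f t).continuous⟩ : C(S1, S1)) :=
    continuous_fst.comp (hF.comp hf)
  have h2 : Continuous fun t : unitInterval =>
      (⟨(f t).symm, (f t).symm.continuous⟩ : C(S1, S1)) :=
    continuous_snd.comp (hF.comp hf)
  apply continuous_induced_rng.mpr
  show Continuous fun t : unitInterval =>
    ((⟨(g * f t * g⁻¹ : HomeoCircle), (g * f t * g⁻¹ : HomeoCircle).continuous⟩ : C(S1, S1)),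
     (⟨(g * f t * g⁻¹ : HomeoCircle).symm,
        (g * f t * g⁻¹ : HomeoCircle).symm.continuous⟩ : C(S1, S1)))
  apply Continuous.prodMk
  · have e1 : (fun t : unitInterval =>
        (⟨(g * f t * g⁻¹ : HomeoCircle), (g * f t * g⁻¹ : HomeoCircle).continuous⟩ : C(S1, S1)))
        = fun t : unitInterval =>
          (⟨g, g.continuous⟩ : C(S1, S1)).comp
            ((⟨f t, (f t).continuous⟩ : C(S1, S1)).comp
              (⟨(g⁻¹ : HomeoCircle), (g⁻¹ : HomeoCircle).continuous⟩ : C(S1, S1))) := by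
      funext t; ext z; rfl
    rw [e1]
    exact (ContinuousMap.continuous_postcomp _).comp
      ((ContinuousMap.continuous_precomp _).comp h1)
  · have e2 : (fun t : unitInterval =>
        (⟨(g * f t * g⁻¹ : HomeoCircle).symm,
           (g * f t * g⁻¹ : HomeoCircle).symm.continuous⟩ : C(S1, S1)))
        = fun t : unitInterval =>
          (⟨g, g.continuous⟩ : C(S1, S1)).comp
            ((⟨(f t).symm, (f t).symm.continuous⟩ : C(S1, S1)).comp
              (⟨(g⁻¹ : HomeoCircle), (g⁻¹ : HomeoCircle).continuous⟩ : C(S1, S1))) := by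
      funext t; ext z; rfl
    rw [e2]
    exact (ContinuousMap.continuous_postcomp _).comp
      ((ContinuousMap.continuous_precomp _).comp h2)

private lemma Jset_conj_sub (G : Subgroup HomeoCircle) {g : HomeoCircle} (hg : g ∈ G) (x : S1) :
    ⇑g '' Jset ↑G x ⊆ Jset ↑G (g x) := by
  rintro _ ⟨y, ⟨f, hc, hm, h0, hfix, t, hty⟩, rfl⟩
  refine ⟨fun t => g * f t * g⁻¹, continuous_conj hc g, fun s => ?_, ?_, fun s => ?_, t, ?_⟩
  · exact SetLike.mem_coe.mpr (mul_mem (mul_mem hg (SetLike.mem_coe.mp (hm s))) (inv_mem hg))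
  · show g * f 0 * g⁻¹ = 1
    rw [h0, mul_one, mul_inv_cancel]
  · show (g * f s * g⁻¹) (g x) = g x
    simp only [HomeoCircle.mul_apply, HomeoCircle.inv_apply, Homeomorph.symm_apply_apply]
    rw [hfix s]
  · show (g * f t * g⁻¹) (g y) ≠ g y
    simp only [HomeoCircle.mul_apply, HomeoCircle.inv_apply, Homeomorph.symm_apply_apply]
    intro hcon
    exact hty (g.injective hcon)

private lemma Jset_conj_eq (G : Subgroup HomeoCircle) {g : HomeoCircle} (hg : g ∈ G) (x : S1) :
    Jset ↑G (g x) = ⇑g '' Jset ↑G x := by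
  refine subset_antisymm (fun z hz => ?_) (Jset_conj_sub G hg x)
  have e : (g⁻¹ : HomeoCircle) (g x) = x := by
    simp only [HomeoCircle.inv_apply, Homeomorph.symm_apply_apply]
  refine ⟨(g⁻¹ : HomeoCircle) z, ?_, ?_⟩
  · have h1 := Jset_conj_sub G (inv_mem hg) (g x) ⟨z, hz, rfl⟩
    rwa [e] at h1
  · show g ((g⁻¹ : HomeoCircle) z) = z
    simp only [HomeoCircle.inv_apply, Homeomorph.apply_symm_apply]

private lemma Kset_conj_eq (G : Subgroup HomeoCircle) {g : HomeoCircle} (hg : g ∈ G) (x : S1) :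
    (Jset ↑G (g x))ᶜ = ⇑g '' (Jset ↑G x)ᶜ := by
  rw [Set.image_compl_eq g.bijective, Jset_conj_eq G hg x]

private lemma cofinite_of_exists_nonempty (G : Subgroup HomeoCircle)
    (htrans : IsTransitiveGrp ↑G) (hex : ∃ x₀, (Jset ↑G x₀).Nonempty) :
    ∀ x : S1, ((Jset ↑G x)ᶜ).Finite := by
  obtain ⟨x₀, hx₀⟩ := hex
  have hJne : ∀ y, (Jset ↑G y).Nonempty := by
    intro y
    obtain ⟨g, hg, hgx⟩ := htrans x₀ y
    rw [← hgx, Jset_conj_eq G (SetLike.mem_coe.mp hg) x₀]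
    exact hx₀.image _
  intro x
  have hKclosed : ∀ w : S1, IsClosed (Jset ↑G w)ᶜ := fun w => (Jset_isOpen _ w).isClosed_compl
  have hKself : ∀ w : S1, w ∈ (Jset ↑G w)ᶜ := fun w => not_mem_Jset_self _ w
  have hKmono : ∀ w z : S1, z ∈ (Jset ↑G w)ᶜ → (Jset ↑G z)ᶜ ⊆ (Jset ↑G w)ᶜ := fun w z hz =>
    Set.compl_subset_compl.mpr (Jset_subset_of_not_mem hz)
  set S : Set (Set S1) := (fun w => (Jset ↑G w)ᶜ) '' ((Jset ↑G x)ᶜ) with hS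
  have hchain : ∀ c ⊆ S, IsChain (· ⊆ ·) c → c.Nonempty → ∃ lb ∈ S, ∀ s ∈ c, lb ⊆ s := by
    intro c hcS hcchain hcne
    haveI : Nonempty c := hcne.to_subtype
    have hdir : Directed (· ⊇ ·) (fun s : c => (s : Set S1)) := by
      rintro s t
      rcases hcchain.total s.2 t.2 with h | h
      · exact ⟨s, Set.Subset.rfl, h⟩
      · exact ⟨t, h, Set.Subset.rfl⟩
    have hne' : ∀ s : c, (s : Set S1).Nonempty := by
      rintro ⟨s, hs⟩
      obtain ⟨w, _, rfl⟩ := hcS hs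
      exact ⟨w, hKself w⟩
    have hinter := IsCompact.nonempty_iInter_of_directed_nonempty_isCompact_isClosed
      (fun s : c => (s : Set S1)) hdir hne'
      (fun s => by
        show IsCompact (s : Set S1)
        obtain ⟨w, _, h⟩ := hcS s.2
        rw [← h]
        exact (hKclosed w).isCompact)
      (fun s => by
        show IsClosed (s : Set S1)
        obtain ⟨w, _, h⟩ := hcS s.2
        rw [← h]
        exact hKclosed w)
    obtain ⟨w₀, hw₀⟩ := hinter
    have hw₀mem : ∀ s ∈ c, w₀ ∈ s := fun s hs => Set.mem_iInter.mp hw₀ ⟨s, hs⟩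
    obtain ⟨s₀, hs₀c⟩ := hcne
    obtain ⟨w₁, hw₁, hs₀⟩ := hcS hs₀c
    have hw₀Kx : w₀ ∈ (Jset ↑G x)ᶜ := by
      have hmem := hw₀mem s₀ hs₀c
      rw [← hs₀] at hmem
      exact hKmono x w₁ hw₁ hmem
    refine ⟨(Jset ↑G w₀)ᶜ, ⟨w₀, hw₀Kx, rfl⟩, fun s hs => ?_⟩
    obtain ⟨v, _, rfl⟩ := hcS hs
    exact hKmono v w₀ (hw₀mem _ hs)
  obtain ⟨M, hMsub, hMmin⟩ := zorn_superset_nonempty S hchain _ ⟨x, hKself x, rfl⟩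
  obtain ⟨y, hyKx, hyM⟩ := hMmin.1
  have hMKy : M = (Jset ↑G y)ᶜ := hyM.symm
  have hMw : ∀ w ∈ M, (Jset ↑G w)ᶜ = M := by
    intro w hw
    have h1 : (Jset ↑G w)ᶜ ⊆ M := by
      rw [hMKy]
      exact hKmono y w (by rw [← hMKy]; exact hw)
    exact subset_antisymm h1 (hMmin.2 ⟨w, hMsub hw, rfl⟩ h1)
  have hMne : M.Nonempty := ⟨y, by rw [hMKy]; exact hKself y⟩
  have hMclosed : IsClosed M := by rw [hMKy]; exact hKclosed y
  have hMproper : M ≠ Set.univ := by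
    intro h
    obtain ⟨z, hz⟩ := hJne y
    have hzc : z ∈ (Jset ↑G y)ᶜ := by rw [← hMKy, h]; trivial
    exact hzc hz
  have htransM : ∀ w ∈ M, ∀ w' ∈ M, ∃ g : HomeoCircle, ⇑g '' M = M ∧ g w = w' := by
    intro w hw w' hw'
    obtain ⟨g, hg, hgw⟩ := htrans w w'
    refine ⟨g, ?_, hgw⟩
    have hK := Kset_conj_eq G (SetLike.mem_coe.mp hg) w
    rw [hgw] at hK
    calc ⇑g '' M = ⇑g '' (Jset ↑G w)ᶜ := by rw [hMw w hw]
      _ = (Jset ↑G w')ᶜ := hK.symm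
      _ = M := hMw w' hw'
  have hMfin := homog_finite M hMclosed hMne hMproper htransM
  obtain ⟨g, hg, hgy⟩ := htrans y x
  have hKx : (Jset ↑G x)ᶜ = ⇑g '' M := by
    rw [← hgy, Kset_conj_eq G (SetLike.mem_coe.mp hg) y, hMKy]
  rw [hKx]
  exact hMfin.image _

end JsetProof


/-- Either `J_x = ∅` for every `x ∈ S¹`, or `J_x` has finite complement for every
`x ∈ S¹`. -/
theorem Jset_empty_or_cofinite (G : Subgroup HomeoCircle) (hsub : G ≤ HomeoS1)
    (htrans : IsTransitiveGrp ↑G)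
    (hdef : ∃ f : unitInterval → HomeoCircle, IsIdDeformation ↑G f) :
    (∀ x : S1, Jset ↑G x = ∅) ∨ (∀ x : S1, ((Jset ↑G x)ᶜ).Finite) := by
  by_cases h : ∀ x : S1, Jset ↑G x = ∅
  · exact Or.inl h
  · push_neg at h
    obtain ⟨x₀, hx₀⟩ := h
    exact Or.inr (cofinite_of_exists_nonempty G htrans ⟨x₀, hx₀⟩)
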